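/- arXiv:1710.03442 — 5 statements merged into one kernel-verified Lean document; each statement's English description precedes it below -/
import Mathlib

section
/- Let n ≥ 1, and let x, y ∈ ℝⁿ. If the entries of x sum to 0 (i.e. xᵀe = 0 where e is the all-ones vector), then |xᵀy| ≤ ‖x‖₁ · (max_{i,j} |yᵢ − yⱼ|) / 2. -/
open BigOperators

/-- For `x, y : Fin n → ℝ` with `n ≥ 1`, if the entries of `x` sum to `0`,
then `|xᵀy| ≤ ‖x‖₁ ⋅ (max_{i,j} |yᵢ − yⱼ|) / 2`. -/
theorem bound_of_inner_product (n : ℕ) (hn : 1 ≤ n) (x y : Fin n → ℝ)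
    (hx : ∑ i, x i = 0) :
    |∑ i, x i * y i| ≤ (∑ i, |x i|) * (⨆ i : Fin n, ⨆ j : Fin n, |y i - y j|) / 2 := by
  haveI : Nonempty (Fin n) := Fin.pos_iff_nonempty.mp hn
  obtain ⟨ia, -, ha⟩ := Finset.exists_max_image Finset.univ y ⟨⟨0, hn⟩, Finset.mem_univ _⟩
  obtain ⟨ib, -, hb⟩ := Finset.exists_min_image Finset.univ y ⟨⟨0, hn⟩, Finset.mem_univ _⟩
  set c := (y ia + y ib) / 2 with hc
  have key : ∑ i, x i * y i = ∑ i, x i * (y i - c) := by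
    simp [mul_sub, Finset.sum_sub_distrib, ← Finset.sum_mul, hx]
  have hM : ∀ i j : Fin n, |y i - y j| ≤ ⨆ i : Fin n, ⨆ j : Fin n, |y i - y j| := by
    intro i j
    refine le_trans (le_ciSup (f := fun j => |y i - y j|) (Set.Finite.bddAbove (Set.finite_range _)) j) ?_
    exact le_ciSup (f := fun i => ⨆ j : Fin n, |y i - y j|) (Set.Finite.bddAbove (Set.finite_range _)) i
  have hbound : ∀ i, |y i - c| ≤ (⨆ i : Fin n, ⨆ j : Fin n, |y i - y j|) / 2 := by
    intro i
    have h1 := hb i (Finset.mem_univ i)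
    have h2 := ha i (Finset.mem_univ i)
    have h3 := hM ia ib
    rw [abs_of_nonneg (by linarith)] at h3
    rw [abs_le]
    constructor <;> simp only [hc] <;> linarith
  calc |∑ i, x i * y i| = |∑ i, x i * (y i - c)| := by rw [key]
    _ ≤ ∑ i, |x i * (y i - c)| := Finset.abs_sum_le_sum_abs _ _
    _ = ∑ i, |x i| * |y i - c| := by simp [abs_mul]
    _ ≤ ∑ i, |x i| * ((⨆ i : Fin n, ⨆ j : Fin n, |y i - y j|) / 2) := by
        refine Finset.sum_le_sum fun i _ => ?_
        exact mul_le_mul_of_nonneg_left (hbound i) (abs_nonneg _)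
    _ = (∑ i, |x i|) * (⨆ i : Fin n, ⨆ j : Fin n, |y i - y j|) / 2 := by
        rw [← Finset.sum_mul]; ring
end

section
/- Let P^{π'}, P^π, P^β be n×n row-stochastic real matrices, γ ∈ (0,1), α ∈ [0,1], and ρ₀ ∈ ℝⁿ a vector with nonnegative entries summing to 1. Define row vectors ρ^{π'}ᵀ = ρ₀ᵀ(I − γP^{π'})⁻¹, ρ^πᵀ = ρ₀ᵀ(I − γP^π)⁻¹, ρ^βᵀ = ρ₀ᵀ(I − γP^β)⁻¹. Then (ρ^{π'} − (α ρ^π + (1−α) ρ^β))ᵀ = γ (α ρ^πᵀ(P^{π'} − P^π) + (1−α) ρ^βᵀ(P^{π'} − P^β)) (I − γP^{π'})⁻¹. -/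
open Matrix BigOperators

def IsStochastic {m n : Type*} [Fintype m] [Fintype n] (M : Matrix m n ℝ) : Prop :=
  (∀ i j, 0 ≤ M i j) ∧ ∀ i, ∑ j, M i j = 1

attribute [local instance] Matrix.linftyOpNormedAddCommGroup Matrix.linftyOpNormedRing
  Matrix.linftyOpNormedAlgebra

lemma isUnit_det_one_sub_smul {n : ℕ} (P : Matrix (Fin n) (Fin n) ℝ)
    (hP : IsStochastic P) {γ : ℝ} (h0 : 0 ≤ γ) (h1 : γ < 1) :
    IsUnit (1 - γ • P).det := by
  haveI : CompleteSpace (Matrix (Fin n) (Fin n) ℝ) := FiniteDimensional.complete ℝ _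
  have hnP : ‖P‖₊ ≤ 1 := by
    rw [Matrix.linfty_opNNNorm_def]
    refine Finset.sup_le fun i _ => ?_
    refine le_of_eq ?_
    have : ((∑ j, ‖P i j‖₊ : NNReal) : ℝ) = 1 := by
      push_cast
      rw [← hP.2 i]
      exact Finset.sum_congr rfl fun j _ => abs_of_nonneg (hP.1 i j)
    exact_mod_cast this
  have hn : ‖γ • P‖ < 1 := by
    rw [norm_smul]
    calc ‖γ‖ * ‖P‖ ≤ γ * 1 := by
          apply mul_le_mul
          · exact le_of_eq (abs_of_nonneg h0)
          · exact_mod_cast hnP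
          · exact norm_nonneg _
          · exact h0
      _ < 1 := by linarith
  exact (Matrix.isUnit_iff_isUnit_det _).mp (isUnit_one_sub_of_norm_lt_one hn)

lemma smul_mat_vecMul {n : ℕ} (γ : ℝ) (v : Fin n → ℝ) (M : Matrix (Fin n) (Fin n) ℝ) :
    v ᵥ* (γ • M) = γ • (v ᵥ* M) := by
  ext i
  simp [Matrix.vecMul, dotProduct, Finset.mul_sum, mul_left_comm]

lemma resolvent_diff {n : ℕ} (A B : Matrix (Fin n) (Fin n) ℝ)
    (hA : IsUnit A.det) (hB : IsUnit B.det) (ρ₀ : Fin n → ℝ) :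
    ρ₀ ᵥ* A⁻¹ - ρ₀ ᵥ* B⁻¹ = ((ρ₀ ᵥ* B⁻¹) ᵥ* (B - A)) ᵥ* A⁻¹ := by
  rw [Matrix.vecMul_vecMul, Matrix.vecMul_vecMul]
  have : B⁻¹ * ((B - A) * A⁻¹) = A⁻¹ - B⁻¹ := by
    rw [Matrix.sub_mul, Matrix.mul_nonsing_inv A hA, Matrix.mul_sub, Matrix.mul_one,
      ← Matrix.mul_assoc, Matrix.nonsing_inv_mul B hB, Matrix.one_mul]
  rw [← Matrix.mul_assoc, Matrix.mul_assoc, this, Matrix.vecMul_sub]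

/-- identity for the difference of discounted state distributions:
`(ρ^{π'} − (α ρ^π + (1−α) ρ^β))ᵀ
  = γ (α ρ^πᵀ(P^{π'} − P^π) + (1−α) ρ^βᵀ(P^{π'} − P^β)) (I − γP^{π'})⁻¹`. -/
theorem mixture_state_distribution_identity (n : ℕ)
    (Pπ' Pπ Pβ : Matrix (Fin n) (Fin n) ℝ)
    (hPπ' : IsStochastic Pπ') (hPπ : IsStochastic Pπ) (hPβ : IsStochastic Pβ)
    (γ : ℝ) (hγ : γ ∈ Set.Ioo (0 : ℝ) 1) (α : ℝ) (hα : α ∈ Set.Icc (0 : ℝ) 1)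
    (ρ₀ : Fin n → ℝ) (hρ₀pos : ∀ i, 0 ≤ ρ₀ i) (hρ₀sum : ∑ i, ρ₀ i = 1) :
    let ρπ' := ρ₀ ᵥ* (1 - γ • Pπ')⁻¹
    let ρπ := ρ₀ ᵥ* (1 - γ • Pπ)⁻¹
    let ρβ := ρ₀ ᵥ* (1 - γ • Pβ)⁻¹
    ρπ' - (α • ρπ + (1 - α) • ρβ) =
      γ • ((α • (ρπ ᵥ* (Pπ' - Pπ)) + (1 - α) • (ρβ ᵥ* (Pπ' - Pβ))) ᵥ* (1 - γ • Pπ')⁻¹) := by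
  intro ρπ' ρπ ρβ
  obtain ⟨hγ0, hγ1⟩ := hγ
  have hA := isUnit_det_one_sub_smul Pπ' hPπ' hγ0.le hγ1
  have hB := isUnit_det_one_sub_smul Pπ hPπ hγ0.le hγ1
  have hC := isUnit_det_one_sub_smul Pβ hPβ hγ0.le hγ1
  have key : ∀ (Q : Matrix (Fin n) (Fin n) ℝ), IsUnit (1 - γ • Q).det →
      ρπ' - ρ₀ ᵥ* (1 - γ • Q)⁻¹ =
        γ • (((ρ₀ ᵥ* (1 - γ • Q)⁻¹) ᵥ* (Pπ' - Q)) ᵥ* (1 - γ • Pπ')⁻¹) := by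
    intro Q hQ
    have h1 : (1 - γ • Q) - (1 - γ • Pπ') = γ • (Pπ' - Q) := by
      rw [smul_sub]; abel
    have := resolvent_diff (1 - γ • Pπ') (1 - γ • Q) hA hQ ρ₀
    rw [h1] at this
    rw [this, smul_mat_vecMul, Matrix.smul_vecMul]
  have h1 := key Pπ hB
  have h2 := key Pβ hC
  show ρπ' - (α • ρπ + (1 - α) • ρβ) = _
  rw [Matrix.add_vecMul, Matrix.smul_vecMul, Matrix.smul_vecMul, smul_add,
    smul_comm γ α, smul_comm γ (1 - α), ← h1, ← h2]
  funext i
  simp only [Pi.add_apply, Pi.sub_apply, Pi.smul_apply, smul_eq_mul]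
  ring
end

section
/- Let P^{π'}, P^π, P^β be n×n row-stochastic real matrices, γ ∈ (0,1), α ∈ [0,1], and ρ₀ ∈ ℝⁿ a vector with nonnegative entries summing to 1. Define row vectors ρ^{π'}ᵀ = ρ₀ᵀ(I − γP^{π'})⁻¹, ρ^πᵀ = ρ₀ᵀ(I − γP^π)⁻¹, ρ^βᵀ = ρ₀ᵀ(I − γP^β)⁻¹. Then ‖ρ^{π'} − (α ρ^π + (1−α) ρ^β)‖₁ ≤ (γ/(1−γ)) · (α ‖P^{π'} − P^π‖∞ + (1−α) ‖P^{π'} − P^β‖∞) · ‖(I − γP^{π'})⁻¹‖∞. -/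
open Matrix BigOperators

/-- `‖x‖₁`: the sum of the absolute values of the entries of a vector. -/
noncomputable def norm1 {n : Type*} [Fintype n] (x : n → ℝ) : ℝ := ∑ i, |x i|

/-- `‖M‖∞`: the maximum over rows of the sum of absolute values of the entries. -/
noncomputable def normInfM {m n : Type*} [Fintype m] [Fintype n] (M : Matrix m n ℝ) : ℝ :=
  ⨆ i, ∑ j, |M i j|

attribute [local instance] Matrix.linftyOpNormedRing Matrix.linftyOpNormedAlgebra

section Aux

variable {n : ℕ}

lemma row_le_normInfM (M : Matrix (Fin n) (Fin n) ℝ) (i : Fin n) :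
    ∑ j, |M i j| ≤ normInfM M := by
  unfold normInfM
  exact le_ciSup (f := fun i => ∑ j, |M i j|) (Set.Finite.bddAbove (Set.finite_range _)) i

lemma normInfM_nonneg [Nonempty (Fin n)] (M : Matrix (Fin n) (Fin n) ℝ) :
    0 ≤ normInfM M := by
  obtain ⟨i⟩ := (inferInstance : Nonempty (Fin n))
  exact le_trans (Finset.sum_nonneg fun j _ => abs_nonneg _) (row_le_normInfM M i)

lemma normInfM_le [Nonempty (Fin n)] {M : Matrix (Fin n) (Fin n) ℝ} {c : ℝ}
    (h : ∀ i, ∑ j, |M i j| ≤ c) : normInfM M ≤ c := ciSup_le h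

lemma normInfM_mul_le [Nonempty (Fin n)] (M N : Matrix (Fin n) (Fin n) ℝ) :
    normInfM (M * N) ≤ normInfM M * normInfM N := by
  apply normInfM_le
  intro i
  calc ∑ j, |(M * N) i j| ≤ ∑ j, ∑ k, |M i k| * |N k j| := by
        apply Finset.sum_le_sum
        intro j _
        rw [Matrix.mul_apply]
        refine le_trans (Finset.abs_sum_le_sum_abs _ _) ?_
        apply Finset.sum_le_sum
        intro k _
        rw [abs_mul]
    _ = ∑ k, |M i k| * ∑ j, |N k j| := by
        rw [Finset.sum_comm]
        simp [Finset.mul_sum]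
    _ ≤ ∑ k, |M i k| * normInfM N := by
        apply Finset.sum_le_sum
        intro k _
        exact mul_le_mul_of_nonneg_left (row_le_normInfM N k) (abs_nonneg _)
    _ = (∑ k, |M i k|) * normInfM N := by rw [Finset.sum_mul]
    _ ≤ normInfM M * normInfM N :=
        mul_le_mul_of_nonneg_right (row_le_normInfM M i) (normInfM_nonneg N)

lemma norm1_vecMul_le (x : Fin n → ℝ) (M : Matrix (Fin n) (Fin n) ℝ) :
    norm1 (x ᵥ* M) ≤ norm1 x * normInfM M := by
  unfold norm1
  rw [Finset.sum_mul]
  calc ∑ i, |(x ᵥ* M) i| ≤ ∑ i, ∑ j, |x j| * |M j i| := by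
        apply Finset.sum_le_sum
        intro i _
        simp only [Matrix.vecMul, dotProduct]
        refine le_trans (Finset.abs_sum_le_sum_abs _ _) ?_
        apply Finset.sum_le_sum
        intro j _
        rw [abs_mul]
    _ = ∑ j, |x j| * ∑ i, |M j i| := by
        rw [Finset.sum_comm]
        simp [Finset.mul_sum]
    _ ≤ ∑ j, |x j| * normInfM M := by
        apply Finset.sum_le_sum
        intro j _
        exact mul_le_mul_of_nonneg_left (row_le_normInfM M j) (abs_nonneg _)

lemma stochastic_norm_le {P : Matrix (Fin n) (Fin n) ℝ} (hP : IsStochastic P) :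
    ‖P‖ ≤ 1 := by
  rw [Matrix.linfty_opNorm_def]
  have : ∀ i : Fin n, ∑ j, ‖P i j‖₊ ≤ 1 := by
    intro i
    rw [← NNReal.coe_le_coe]
    push_cast
    calc ∑ j, (‖P i j‖₊ : ℝ) = ∑ j, P i j := by
          apply Finset.sum_congr rfl
          intro j _
          rw [coe_nnnorm, Real.norm_eq_abs, abs_of_nonneg (hP.1 i j)]
      _ ≤ 1 := le_of_eq (hP.2 i)
  rw [show (1:ℝ) = ((1 : NNReal) : ℝ) by norm_num, NNReal.coe_le_coe]
  exact Finset.sup_le fun i _ => this i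

lemma smul_stochastic_norm_lt {P : Matrix (Fin n) (Fin n) ℝ} (hP : IsStochastic P)
    {γ : ℝ} (hγ : γ ∈ Set.Ioo (0 : ℝ) 1) : ‖γ • P‖ < 1 := by
  have h := norm_smul γ P
  rw [h, Real.norm_eq_abs, abs_of_pos hγ.1]
  calc γ * ‖P‖ ≤ γ * 1 :=
        mul_le_mul_of_nonneg_left (stochastic_norm_le hP) hγ.1.le
    _ < 1 := by linarith [hγ.2]

/-- The entry-evaluation continuous linear map. -/
noncomputable def entryCLM (i j : Fin n) : Matrix (Fin n) (Fin n) ℝ →L[ℝ] ℝ :=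
  LinearMap.toContinuousLinearMap
    { toFun := fun M => M i j
      map_add' := fun M N => rfl
      map_smul' := fun c M => rfl }

lemma inv_one_sub_smul_nonneg {P : Matrix (Fin n) (Fin n) ℝ} (hP : IsStochastic P)
    {γ : ℝ} (hγ : γ ∈ Set.Ioo (0 : ℝ) 1) (i j : Fin n) :
    0 ≤ (1 - γ • P)⁻¹ i j := by
  have hlt := smul_stochastic_norm_lt hP hγ
  have hsum : Summable (fun k : ℕ => (γ • P) ^ k) :=
    summable_geometric_of_norm_lt_one hlt
  have hneu : (1 - γ • P)⁻¹ = ∑' k : ℕ, (γ • P) ^ k := by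
    rw [Matrix.nonsing_inv_eq_ringInverse, ← geom_series_eq_inverse _ hlt]
    rfl
  have hpow : ∀ (k : ℕ) (a b : Fin n), 0 ≤ ((γ • P) ^ k) a b := by
    intro k
    induction k with
    | zero =>
      intro a b
      simp only [pow_zero, Matrix.one_apply]
      split <;> norm_num
    | succ k ih =>
      intro a b
      rw [pow_succ, Matrix.mul_apply]
      apply Finset.sum_nonneg
      intro c _
      exact mul_nonneg (ih a c) (smul_nonneg hγ.1.le (hP.1 c b))
  have hentry : (1 - γ • P)⁻¹ i j = ∑' k : ℕ, ((γ • P) ^ k) i j := by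
    rw [hneu]
    exact (entryCLM i j).map_tsum hsum
  rw [hentry]
  exact tsum_nonneg fun k => hpow k i j

lemma isUnit_one_sub_smul {P : Matrix (Fin n) (Fin n) ℝ} (hP : IsStochastic P)
    {γ : ℝ} (hγ : γ ∈ Set.Ioo (0 : ℝ) 1) : IsUnit (1 - γ • P) :=
  isUnit_one_sub_of_norm_lt_one (smul_stochastic_norm_lt hP hγ)

/-- ρ = ρ₀ (I - γP)⁻¹ has nonnegative entries summing to 1/(1-γ). -/
lemma rho_props {P : Matrix (Fin n) (Fin n) ℝ} (hP : IsStochastic P)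
    {γ : ℝ} (hγ : γ ∈ Set.Ioo (0 : ℝ) 1)
    {ρ₀ : Fin n → ℝ} (hρ₀pos : ∀ i, 0 ≤ ρ₀ i) (hρ₀sum : ∑ i, ρ₀ i = 1) :
    (∀ i, 0 ≤ (ρ₀ ᵥ* (1 - γ • P)⁻¹) i) ∧
      ∑ i, (ρ₀ ᵥ* (1 - γ • P)⁻¹) i = 1 / (1 - γ) := by
  set A : Matrix (Fin n) (Fin n) ℝ := 1 - γ • P with hA
  set ρ : Fin n → ℝ := ρ₀ ᵥ* A⁻¹ with hρ
  have hpos : ∀ i, 0 ≤ ρ i := by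
    intro i
    simp only [hρ, Matrix.vecMul, dotProduct]
    apply Finset.sum_nonneg
    intro j _
    exact mul_nonneg (hρ₀pos j) (inv_one_sub_smul_nonneg hP hγ j i)
  refine ⟨hpos, ?_⟩
  have hunit := isUnit_one_sub_smul hP hγ
  have hAinv : A⁻¹ * A = 1 :=
    Matrix.nonsing_inv_mul A ((Matrix.isUnit_iff_isUnit_det A).mp hunit)
  have hfix : ρ ᵥ* A = ρ₀ := by
    rw [hρ, Matrix.vecMul_vecMul, hAinv, Matrix.vecMul_one]
  -- componentwise: ρ₀ j = ρ j - γ * ∑ i, ρ i * P i j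
  have hsum : ∑ j, ρ₀ j = ∑ j, ρ j - γ * ∑ i, ρ i := by
    calc ∑ j, ρ₀ j = ∑ j, (ρ ᵥ* A) j := by rw [hfix]
      _ = ∑ j, (ρ j - γ * ∑ i, ρ i * P i j) := by
          apply Finset.sum_congr rfl
          intro j _
          simp only [hA, Matrix.vecMul, dotProduct, Matrix.sub_apply,
            Matrix.one_apply, Matrix.smul_apply, smul_eq_mul]
          rw [Finset.mul_sum]
          rw [show ∑ i, ρ i * ((if i = j then (1:ℝ) else 0) - γ * P i j)
            = ∑ i, ((if i = j then ρ i else 0) - γ * (ρ i * P i j)) from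
            Finset.sum_congr rfl fun i _ => by split <;> ring]
          rw [Finset.sum_sub_distrib, Finset.sum_ite_eq' Finset.univ j ρ]
          simp [Finset.mul_sum]
      _ = ∑ j, ρ j - γ * ∑ i, ρ i := by
          rw [Finset.sum_sub_distrib]
          congr 1
          rw [← Finset.mul_sum, Finset.sum_comm]
          congr 1
          refine Finset.sum_congr rfl fun i _ => ?_
          rw [← Finset.mul_sum, hP.2 i, mul_one]
  have h1γ : (1 : ℝ) - γ ≠ 0 := by have := hγ.2; intro h; linarith
  rw [hρ₀sum] at hsum
  field_simp
  linarith [hsum]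

lemma norm1_smul (c : ℝ) (x : Fin n → ℝ) : norm1 (c • x) = |c| * norm1 x := by
  unfold norm1
  rw [Finset.mul_sum]
  exact Finset.sum_congr rfl fun i _ => by simp [abs_mul]

lemma norm1_add_le (x y : Fin n → ℝ) : norm1 (x + y) ≤ norm1 x + norm1 y := by
  unfold norm1
  rw [← Finset.sum_add_distrib]
  exact Finset.sum_le_sum fun i _ => abs_add_le _ _

lemma vecMul_matSmul (c : ℝ) (x : Fin n → ℝ) (M : Matrix (Fin n) (Fin n) ℝ) :
    x ᵥ* (c • M) = c • (x ᵥ* M) := by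
  funext i
  simp only [Matrix.vecMul, dotProduct, Matrix.smul_apply, Pi.smul_apply,
    smul_eq_mul, Finset.mul_sum]
  exact Finset.sum_congr rfl fun j _ => by ring

/-- The key resolvent difference identity. -/
lemma rho_diff {P Q : Matrix (Fin n) (Fin n) ℝ} (hP : IsStochastic P) (hQ : IsStochastic Q)
    {γ : ℝ} (hγ : γ ∈ Set.Ioo (0 : ℝ) 1) (ρ₀ : Fin n → ℝ) :
    ρ₀ ᵥ* (1 - γ • P)⁻¹ - ρ₀ ᵥ* (1 - γ • Q)⁻¹ =
      γ • ((ρ₀ ᵥ* (1 - γ • Q)⁻¹) ᵥ* ((P - Q) * (1 - γ • P)⁻¹)) := by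
  set AP : Matrix (Fin n) (Fin n) ℝ := 1 - γ • P with hAP
  set AQ : Matrix (Fin n) (Fin n) ℝ := 1 - γ • Q with hAQ
  have h1 : AQ⁻¹ * AQ = 1 :=
    Matrix.nonsing_inv_mul AQ
      ((Matrix.isUnit_iff_isUnit_det AQ).mp (isUnit_one_sub_smul hQ hγ))
  have h2 : AP * AP⁻¹ = 1 :=
    Matrix.mul_nonsing_inv AP
      ((Matrix.isUnit_iff_isUnit_det AP).mp (isUnit_one_sub_smul hP hγ))
  have hsub : AQ - AP = γ • (P - Q) := by
    rw [hAP, hAQ, smul_sub]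
    abel
  have hM : AP⁻¹ - AQ⁻¹ = γ • (AQ⁻¹ * ((P - Q) * AP⁻¹)) := by
    calc AP⁻¹ - AQ⁻¹ = AQ⁻¹ * AQ * AP⁻¹ - AQ⁻¹ * (AP * AP⁻¹) := by
          rw [h1, h2, one_mul, mul_one]
      _ = AQ⁻¹ * ((AQ - AP) * AP⁻¹) := by noncomm_ring
      _ = γ • (AQ⁻¹ * ((P - Q) * AP⁻¹)) := by
          rw [hsub, Matrix.smul_mul, Matrix.mul_smul]
  rw [← Matrix.vecMul_sub, hM, vecMul_matSmul, ← Matrix.vecMul_vecMul]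


end Aux

/-- Lemma 3: bound on the difference of discounted state distributions:
`‖ρ^{π'} − (α ρ^π + (1−α) ρ^β)‖₁
  ≤ (γ/(1−γ)) (α ‖P^{π'} − P^π‖∞ + (1−α) ‖P^{π'} − P^β‖∞) ‖(I − γP^{π'})⁻¹‖∞`. -/
theorem bound_of_mixture_state_distributions (n : ℕ)
    (Pπ' Pπ Pβ : Matrix (Fin n) (Fin n) ℝ)
    (hPπ' : IsStochastic Pπ') (hPπ : IsStochastic Pπ) (hPβ : IsStochastic Pβ)
    (γ : ℝ) (hγ : γ ∈ Set.Ioo (0 : ℝ) 1) (α : ℝ) (hα : α ∈ Set.Icc (0 : ℝ) 1)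
    (ρ₀ : Fin n → ℝ) (hρ₀pos : ∀ i, 0 ≤ ρ₀ i) (hρ₀sum : ∑ i, ρ₀ i = 1) :
    let ρπ' := ρ₀ ᵥ* (1 - γ • Pπ')⁻¹
    let ρπ := ρ₀ ᵥ* (1 - γ • Pπ)⁻¹
    let ρβ := ρ₀ ᵥ* (1 - γ • Pβ)⁻¹
    norm1 (ρπ' - (α • ρπ + (1 - α) • ρβ)) ≤
      γ / (1 - γ) * (α * normInfM (Pπ' - Pπ) + (1 - α) * normInfM (Pπ' - Pβ)) *
        normInfM (1 - γ • Pπ')⁻¹ := by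
  intro ρπ' ρπ ρβ
  have hne : Nonempty (Fin n) := by
    rcases Nat.eq_zero_or_pos n with h | h
    · subst h; simp at hρ₀sum
    · exact ⟨⟨0, h⟩⟩
  set c : ℝ := normInfM (1 - γ • Pπ')⁻¹ with hc
  set a : ℝ := normInfM (Pπ' - Pπ) with ha
  set b : ℝ := normInfM (Pπ' - Pβ) with hb
  have hc0 : 0 ≤ c := normInfM_nonneg _
  have ha0 : 0 ≤ a := normInfM_nonneg _
  have hb0 : 0 ≤ b := normInfM_nonneg _
  have hγ1 : (0:ℝ) < 1 - γ := by linarith [hγ.2]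
  -- norm1 of the two reference distributions
  have hρπ := rho_props hPπ hγ hρ₀pos hρ₀sum
  have hρβ := rho_props hPβ hγ hρ₀pos hρ₀sum
  have hnρπ : norm1 ρπ = 1 / (1 - γ) := by
    unfold norm1
    rw [← hρπ.2]
    exact Finset.sum_congr rfl fun i _ => abs_of_nonneg (hρπ.1 i)
  have hnρβ : norm1 ρβ = 1 / (1 - γ) := by
    unfold norm1
    rw [← hρβ.2]
    exact Finset.sum_congr rfl fun i _ => abs_of_nonneg (hρβ.1 i)
  -- the two difference identities
  have hdπ := rho_diff hPπ' hPπ hγ ρ₀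
  have hdβ := rho_diff hPπ' hPβ hγ ρ₀
  -- bound each difference
  have key : ∀ (Q : Matrix (Fin n) (Fin n) ℝ) (ρQ : Fin n → ℝ),
      norm1 ρQ = 1 / (1 - γ) →
      norm1 (γ • (ρQ ᵥ* ((Pπ' - Q) * (1 - γ • Pπ')⁻¹))) ≤
        γ / (1 - γ) * (normInfM (Pπ' - Q) * c) := by
    intro Q ρQ hρQ
    rw [norm1_smul, abs_of_pos hγ.1]
    calc γ * norm1 (ρQ ᵥ* ((Pπ' - Q) * (1 - γ • Pπ')⁻¹))
        ≤ γ * (norm1 ρQ * normInfM ((Pπ' - Q) * (1 - γ • Pπ')⁻¹)) :=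
          mul_le_mul_of_nonneg_left (norm1_vecMul_le _ _) hγ.1.le
      _ ≤ γ * (norm1 ρQ * (normInfM (Pπ' - Q) * c)) := by
          apply mul_le_mul_of_nonneg_left _ hγ.1.le
          apply mul_le_mul_of_nonneg_left (normInfM_mul_le _ _)
          rw [hρQ]; positivity
      _ = γ / (1 - γ) * (normInfM (Pπ' - Q) * c) := by
          rw [hρQ]; field_simp
  have h1 : norm1 (ρπ' - ρπ) ≤ γ / (1 - γ) * (a * c) := by
    rw [hdπ]; exact key Pπ ρπ hnρπ
  have h2 : norm1 (ρπ' - ρβ) ≤ γ / (1 - γ) * (b * c) := by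
    rw [hdβ]; exact key Pβ ρβ hnρβ
  have hdecomp : ρπ' - (α • ρπ + (1 - α) • ρβ)
      = α • (ρπ' - ρπ) + (1 - α) • (ρπ' - ρβ) := by
    funext i
    simp only [Pi.add_apply, Pi.sub_apply, Pi.smul_apply, smul_eq_mul]
    ring
  rw [hdecomp]
  have hα1 : (0:ℝ) ≤ 1 - α := by linarith [hα.2]
  calc norm1 (α • (ρπ' - ρπ) + (1 - α) • (ρπ' - ρβ))
      ≤ norm1 (α • (ρπ' - ρπ)) + norm1 ((1 - α) • (ρπ' - ρβ)) := norm1_add_le _ _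
    _ = α * norm1 (ρπ' - ρπ) + (1 - α) * norm1 (ρπ' - ρβ) := by
        rw [norm1_smul, norm1_smul, abs_of_nonneg hα.1, abs_of_nonneg hα1]
    _ ≤ α * (γ / (1 - γ) * (a * c)) + (1 - α) * (γ / (1 - γ) * (b * c)) :=
        add_le_add (mul_le_mul_of_nonneg_left h1 hα.1)
          (mul_le_mul_of_nonneg_left h2 hα1)
    _ = γ / (1 - γ) * (α * a + (1 - α) * b) * c := by ring
end

section
/- Let S and A be nonempty finite types, γ ∈ (0,1), P a row-stochastic matrix of size |S×A|×|S|, r ∈ ℝ^{S×A} a reward vector, and ρ₀ ∈ ℝ^S a vector with nonnegative entries summing to 1. For a policy π given by a row-stochastic matrix Π^π of size |S|×|S×A| define P^π = Π^πP, r^π = Π^πr, v^π = (I − γP^π)⁻¹r^π, q^π = r + γPv^π, the performance η(π) = ρ₀ᵀv^π, and the discounted state distribution row vector ρ^πᵀ = ρ₀ᵀ(I − γP^π)⁻¹; for two policies π, π′ define the advantage vector Ā^π_{π'} = (Π^{π'} − Π^π)q^π. Then for any two policies π and π′: η(π′) − η(π) = ρ^{π'}ᵀ Ā^π_{π'}.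 -/
open Matrix BigOperators

lemma IsStochastic.mul {m n k : Type*} [Fintype m] [Fintype n] [Fintype k]
    {M : Matrix m n ℝ} {N : Matrix n k ℝ} (hM : IsStochastic M) (hN : IsStochastic N) :
    IsStochastic (M * N) := by
  refine ⟨fun i j => Finset.sum_nonneg fun l _ => mul_nonneg (hM.1 i l) (hN.1 l j), fun i => ?_⟩
  simp only [Matrix.mul_apply]
  rw [Finset.sum_comm]
  simp only [← Finset.mul_sum]
  simp [hN.2, hM.2]

lemma unit_det {n : Type*} [Fintype n] [DecidableEq n] {M : Matrix n n ℝ}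
    (hM : IsStochastic M) {γ : ℝ} (hγ : γ ∈ Set.Ioo (0:ℝ) 1) :
    IsUnit (1 - γ • M).det := by
  rw [isUnit_iff_ne_zero]
  apply det_ne_zero_of_sum_row_lt_diag
  intro k
  have hle : M k k ≤ 1 := by
    rw [← hM.2 k]
    exact Finset.single_le_sum (fun j _ => hM.1 k j) (Finset.mem_univ k)
  have h1 : ∑ j ∈ Finset.univ.erase k, ‖(1 - γ • M) k j‖ = γ * (1 - M k k) := by
    have : ∀ j ∈ Finset.univ.erase k, ‖(1 - γ • M) k j‖ = γ * M k j := by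
      intro j hj
      have hjk : j ≠ k := Finset.ne_of_mem_erase hj
      simp [Matrix.sub_apply, Matrix.one_apply_ne' (Ne.symm hjk).symm,
        Matrix.one_apply_ne (Ne.symm hjk), abs_of_nonneg,
        mul_nonneg hγ.1.le (hM.1 k j), abs_mul, abs_of_nonneg hγ.1.le,
        abs_of_nonneg (hM.1 k j)]
    rw [Finset.sum_congr rfl this, ← Finset.mul_sum]
    congr 1
    have := hM.2 k
    have h := Finset.add_sum_erase Finset.univ (M k) (Finset.mem_univ k)
    linarith
  have h2 : ‖(1 - γ • M) k k‖ = 1 - γ * M k k := by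
    have : γ * M k k ≤ γ * 1 := mul_le_mul_of_nonneg_left hle hγ.1.le
    simp only [Matrix.sub_apply, Matrix.one_apply_eq, Matrix.smul_apply, smul_eq_mul]
    rw [Real.norm_eq_abs, abs_of_nonneg]
    linarith [hγ.2]
  rw [h1, h2]
  nlinarith [hγ.1, hγ.2, hM.1 k k]

/-- performance difference lemma. `polπ`, `polπ'` are the policy matrices
`Π^π, Π^{π'}`.  With `P^π = Π^πP`, `r^π = Π^πr`, `v^π = (I − γP^π)⁻¹r^π`, `q^π = r + γPv^π`,
`η(π) = ρ₀ᵀv^π`, `ρ^πᵀ = ρ₀ᵀ(I − γP^π)⁻¹`, and `Ā^π_{π'} = (Π^{π'} − Π^π)q^π`: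
`η(π′) − η(π) = ρ^{π'}ᵀ Ā^π_{π'}`. -/
theorem difference_of_performances_as_advantage
    {S A : Type*} [Fintype S] [Fintype A] [Nonempty S] [Nonempty A] [DecidableEq S]
    (γ : ℝ) (hγ : γ ∈ Set.Ioo (0 : ℝ) 1)
    (P : Matrix (S × A) S ℝ) (hP : IsStochastic P)
    (r : S × A → ℝ)
    (ρ₀ : S → ℝ) (hρ₀pos : ∀ s, 0 ≤ ρ₀ s) (hρ₀sum : ∑ s, ρ₀ s = 1)
    (polπ polπ' : Matrix S (S × A) ℝ)
    (hpolπ : IsStochastic polπ) (hpolπ' : IsStochastic polπ') :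
    let Pπ := polπ * P
    let Pπ' := polπ' * P
    let vπ := (1 - γ • Pπ)⁻¹ *ᵥ (polπ *ᵥ r)
    let vπ' := (1 - γ • Pπ')⁻¹ *ᵥ (polπ' *ᵥ r)
    let qπ := r + γ • (P *ᵥ vπ)
    let Abar := (polπ' - polπ) *ᵥ qπ
    let ρπ' := ρ₀ ᵥ* (1 - γ • Pπ')⁻¹
    ρ₀ ⬝ᵥ vπ' - ρ₀ ⬝ᵥ vπ = ρπ' ⬝ᵥ Abar := by
  intro Pπ Pπ' vπ vπ' qπ Abar ρπ'
  have hPπ : IsStochastic Pπ := hpolπ.mul hP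
  have hPπ' : IsStochastic Pπ' := hpolπ'.mul hP
  have hM : IsUnit (1 - γ • Pπ).det := unit_det hPπ hγ
  have hM' : IsUnit (1 - γ • Pπ').det := unit_det hPπ' hγ
  -- (1 - γ•Pπ) *ᵥ vπ = rπ
  have hvπ : (1 - γ • Pπ) *ᵥ vπ = polπ *ᵥ r := by
    show (1 - γ • Pπ) *ᵥ ((1 - γ • Pπ)⁻¹ *ᵥ (polπ *ᵥ r)) = _
    rw [Matrix.mulVec_mulVec, Matrix.mul_nonsing_inv _ hM, Matrix.one_mulVec]
  -- polπ *ᵥ qπ = vπ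
  have hq : polπ *ᵥ qπ = vπ := by
    show polπ *ᵥ (r + γ • (P *ᵥ vπ)) = vπ
    rw [Matrix.mulVec_add, Matrix.mulVec_smul]
    have : polπ *ᵥ (P *ᵥ vπ) = Pπ *ᵥ vπ := by
      rw [Matrix.mulVec_mulVec]
    rw [this]
    have h2 : vπ - γ • (Pπ *ᵥ vπ) = polπ *ᵥ r := by
      rw [← hvπ, Matrix.sub_mulVec, Matrix.one_mulVec, Matrix.smul_mulVec]
    have := h2
    rw [← this]
    abel
  -- Abar = rπ' - (1 - γ•Pπ') *ᵥ vπ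
  have hA : Abar = polπ' *ᵥ r - (1 - γ • Pπ') *ᵥ vπ := by
    show (polπ' - polπ) *ᵥ qπ = _
    rw [Matrix.sub_mulVec, hq]
    have : polπ' *ᵥ qπ = polπ' *ᵥ r + γ • (Pπ' *ᵥ vπ) := by
      show polπ' *ᵥ (r + γ • (P *ᵥ vπ)) = _
      rw [Matrix.mulVec_add, Matrix.mulVec_smul, Matrix.mulVec_mulVec]
    rw [this, Matrix.sub_mulVec, Matrix.one_mulVec, Matrix.smul_mulVec]
    abel
  have key : (1 - γ • Pπ')⁻¹ *ᵥ Abar = vπ' - vπ := by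
    have hc : (1 - γ • Pπ')⁻¹ *ᵥ ((1 - γ • Pπ') *ᵥ vπ) = vπ := by
      rw [Matrix.mulVec_mulVec, Matrix.nonsing_inv_mul _ hM', Matrix.one_mulVec]
    rw [hA, Matrix.mulVec_sub, hc]
  show _ = ρπ' ⬝ᵥ Abar
  rw [show ρπ' ⬝ᵥ Abar = ρ₀ ⬝ᵥ ((1 - γ • Pπ')⁻¹ *ᵥ Abar) from
    (Matrix.dotProduct_mulVec ρ₀ _ Abar).symm, key, dotProduct_sub]
end

section
/- Let S and A be nonempty finite types, γ ∈ (0,1), P a row-stochastic matrix of size |S×A|×|S|, r ∈ ℝ^{S×A}, and ρ₀ ∈ ℝ^S a vector with nonnegative entries summing to 1. For a policy π given by a row-stochastic matrix Π^π of size |S|×|S×A| define P^π = Π^πP, r^π = Π^πr, v^π = (I − γP^π)⁻¹r^π, q^π = r + γPv^π, η(π) = ρ₀ᵀv^π, and ρ^πᵀ = ρ₀ᵀ(I − γP^π)⁻¹; for policies π, π′ define Ā^π_{π'} = (Π^{π'} − Π^π)q^π. Then for any policies π, π′ (targets), β (behavior), and any α ∈ [0,1]: η(π′) − η(π) ≥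 α ρ^πᵀ Ā^π_{π'} + (1−α) ρ^βᵀ Ā^π_{π'} − (γ/(1−γ)²) · (α ‖Π^{π'} − Π^π‖∞² + (1−α) ‖Π^{π'} − Π^π‖∞ ‖Π^{π'} − Π^β‖∞) · ‖q^π‖∞. -/
open Matrix BigOperators

/-- `‖x‖∞`: the maximum absolute entry of a vector. -/
noncomputable def normInfV {n : Type*} [Fintype n] (x : n → ℝ) : ℝ :=
  ⨆ i, |x i|

attribute [local instance] Matrix.linftyOpNormedAddCommGroup Matrix.linftyOpNormedRing
  Matrix.linftyOpNormedAlgebra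

section Aux
variable {m n p : Type*} [Fintype m] [Fintype n] [Fintype p]

lemma aux_norm_le_one (M : Matrix m n ℝ) (h : IsStochastic M) : ‖M‖ ≤ 1 := by
  rw [Matrix.linfty_opNorm_def]
  have hb : ((Finset.univ : Finset m).sup fun i => ∑ j, ‖M i j‖₊) ≤ 1 := by
    apply Finset.sup_le
    intro i _
    rw [← NNReal.coe_le_coe]
    push_cast
    simp only [coe_nnnorm, Real.norm_eq_abs]
    calc ∑ j, |M i j| = ∑ j, M i j := Finset.sum_congr rfl fun j _ => abs_of_nonneg (h.1 i j)
      _ ≤ 1 := le_of_eq (h.2 i)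
  exact_mod_cast hb

lemma aux_normInfV_eq [Nonempty n] (x : n → ℝ) : normInfV x = ‖x‖ := by
  have hbdd : BddAbove (Set.range fun i => |x i|) := Set.Finite.bddAbove (Set.finite_range _)
  apply le_antisymm
  · exact ciSup_le fun i => by rw [← Real.norm_eq_abs]; exact norm_le_pi_norm x i
  · have h0 : 0 ≤ normInfV x :=
      le_ciSup_of_le hbdd (Classical.arbitrary n) (abs_nonneg _)
    rw [pi_norm_le_iff_of_nonneg h0]
    intro i
    rw [Real.norm_eq_abs]
    exact le_ciSup hbdd i

lemma aux_normInfM_eq [Nonempty m] (M : Matrix m n ℝ) : normInfM M = ‖M‖ := by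
  have hbdd : BddAbove (Set.range fun i => ∑ j, |M i j|) :=
    Set.Finite.bddAbove (Set.finite_range _)
  have hrow : ∀ i, ∑ j, |M i j| = ((∑ j, ‖M i j‖₊ : NNReal) : ℝ) := by
    intro i; push_cast; simp [Real.norm_eq_abs]
  apply le_antisymm
  · apply ciSup_le
    intro i
    rw [Matrix.linfty_opNorm_def, hrow i]
    have : (∑ j, ‖M i j‖₊) ≤ Finset.univ.sup fun i => ∑ j, ‖M i j‖₊ :=
      Finset.le_sup (f := fun i => ∑ j, ‖M i j‖₊) (Finset.mem_univ i)
    exact_mod_cast this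
  · obtain ⟨i, _, hi⟩ := Finset.exists_mem_eq_sup (Finset.univ : Finset m)
      Finset.univ_nonempty (fun i => ∑ j, ‖M i j‖₊)
    rw [Matrix.linfty_opNorm_def, hi, ← hrow i]
    exact le_ciSup hbdd i

lemma aux_abs_dot_le {S : Type*} [Fintype S] (ρ : S → ℝ) (hpos : ∀ s, 0 ≤ ρ s)
    (hsum : ∑ s, ρ s = 1) (y : S → ℝ) : |ρ ⬝ᵥ y| ≤ ‖y‖ := by
  unfold dotProduct
  calc |∑ i, ρ i * y i| ≤ ∑ i, |ρ i * y i| := Finset.abs_sum_le_sum_abs _ _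
    _ = ∑ i, ρ i * |y i| := Finset.sum_congr rfl fun i _ => by
        rw [abs_mul, abs_of_nonneg (hpos i)]
    _ ≤ ∑ i, ρ i * ‖y‖ := Finset.sum_le_sum fun i _ =>
        mul_le_mul_of_nonneg_left (by rw [← Real.norm_eq_abs]; exact norm_le_pi_norm y i) (hpos i)
    _ = ‖y‖ := by rw [← Finset.sum_mul, hsum, one_mul]

lemma aux_stoch_mul (M : Matrix m n ℝ) (N : Matrix n p ℝ) (hM : IsStochastic M)
    (hN : IsStochastic N) : IsStochastic (M * N) := by
  constructor
  · intro i j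
    exact Finset.sum_nonneg fun k _ => mul_nonneg (hM.1 i k) (hN.1 k j)
  · intro i
    simp only [Matrix.mul_apply]
    rw [Finset.sum_comm]
    simp only [← Finset.mul_sum]
    simp [hN.2, hM.2 i]

lemma aux_inv_norm_le {S : Type*} [Fintype S] [DecidableEq S] [Nonempty S] {γ : ℝ}
    (hγ0 : 0 ≤ γ) (hγ1 : γ < 1) (M : Matrix S S ℝ) (hM : ‖M‖ ≤ 1) :
    ‖(1 - γ • M)⁻¹‖ ≤ (1 - γ)⁻¹ := by
  have hx : ‖γ • M‖ ≤ γ := by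
    rw [norm_smul, Real.norm_eq_abs, abs_of_nonneg hγ0]
    nlinarith [norm_nonneg M]
  have hx1 : ‖γ • M‖ < 1 := lt_of_le_of_lt hx hγ1
  rw [Matrix.nonsing_inv_eq_ringInverse, ← geom_series_eq_inverse _ hx1]
  have h1 := tsum_geometric_le_of_norm_lt_one _ hx1
  rw [norm_one] at h1
  have h2 : (1 - ‖γ • M‖)⁻¹ ≤ (1 - γ)⁻¹ := by
    apply inv_anti₀ <;> linarith
  linarith

lemma aux_isUnit {S : Type*} [Fintype S] [DecidableEq S] [Nonempty S] {γ : ℝ}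
    (hγ0 : 0 ≤ γ) (hγ1 : γ < 1) (M : Matrix S S ℝ) (hM : ‖M‖ ≤ 1) :
    IsUnit (1 - γ • M).det := by
  apply (Matrix.isUnit_iff_isUnit_det _).mp
  apply isUnit_one_sub_of_norm_lt_one
  rw [norm_smul, Real.norm_eq_abs, abs_of_nonneg hγ0]
  nlinarith [norm_nonneg M]

end Aux

set_option maxHeartbeats 1000000

/-- Theorem 1, On- and Off-Policy Monotonic Policy Improvement Guarantee.
`polπ`, `polπ'`, `polβ` are the policy matrices `Π^π, Π^{π'}, Π^β`:
`η(π′) − η(π) ≥ α ρ^πᵀ Ā^π_{π'} + (1−α) ρ^βᵀ Ā^π_{π'}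
  − (γ/(1−γ)²)(α ‖Π^{π'} − Π^π‖∞² + (1−α) ‖Π^{π'} − Π^π‖∞ ‖Π^{π'} − Π^β‖∞)‖q^π‖∞`. -/
theorem on_and_off_policy_monotonic_policy_improvement
    {S A : Type*} [Fintype S] [Fintype A] [Nonempty S] [Nonempty A] [DecidableEq S]
    (γ : ℝ) (hγ : γ ∈ Set.Ioo (0 : ℝ) 1)
    (P : Matrix (S × A) S ℝ) (hP : IsStochastic P)
    (r : S × A → ℝ)
    (ρ₀ : S → ℝ) (hρ₀pos : ∀ s, 0 ≤ ρ₀ s) (hρ₀sum : ∑ s, ρ₀ s = 1)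
    (polπ polπ' polβ : Matrix S (S × A) ℝ)
    (hpolπ : IsStochastic polπ) (hpolπ' : IsStochastic polπ') (hpolβ : IsStochastic polβ)
    (α : ℝ) (hα : α ∈ Set.Icc (0 : ℝ) 1) :
    let Pπ := polπ * P
    let Pπ' := polπ' * P
    let Pβ := polβ * P
    let vπ := (1 - γ • Pπ)⁻¹ *ᵥ (polπ *ᵥ r)
    let vπ' := (1 - γ • Pπ')⁻¹ *ᵥ (polπ' *ᵥ r)
    let qπ := r + γ • (P *ᵥ vπ)
    let Abar := (polπ' - polπ) *ᵥ qπ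
    let ρπ := ρ₀ ᵥ* (1 - γ • Pπ)⁻¹
    let ρβ := ρ₀ ᵥ* (1 - γ • Pβ)⁻¹
    ρ₀ ⬝ᵥ vπ' - ρ₀ ⬝ᵥ vπ ≥
      α * (ρπ ⬝ᵥ Abar) + (1 - α) * (ρβ ⬝ᵥ Abar) -
        γ / (1 - γ) ^ 2 *
          (α * normInfM (polπ' - polπ) ^ 2 +
            (1 - α) * normInfM (polπ' - polπ) * normInfM (polπ' - polβ)) *
          normInfV qπ := by
  obtain ⟨hγ0, hγ1⟩ := hγ
  obtain ⟨hα0, hα1⟩ := hα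
  intro Pπ Pπ' Pβ vπ vπ' qπ Abar ρπ ρβ
  have hγ0' : (0:ℝ) ≤ γ := le_of_lt hγ0
  have hPπ : IsStochastic Pπ := aux_stoch_mul _ _ hpolπ hP
  have hPπ' : IsStochastic Pπ' := aux_stoch_mul _ _ hpolπ' hP
  have hPβ : IsStochastic Pβ := aux_stoch_mul _ _ hpolβ hP
  have hnPπ : ‖Pπ‖ ≤ 1 := aux_norm_le_one _ hPπ
  have hnPπ' : ‖Pπ'‖ ≤ 1 := aux_norm_le_one _ hPπ'
  have hnPβ : ‖Pβ‖ ≤ 1 := aux_norm_le_one _ hPβ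
  have hnP : ‖P‖ ≤ 1 := aux_norm_le_one _ hP
  have hdπ : IsUnit (1 - γ • Pπ).det := aux_isUnit hγ0' hγ1 _ hnPπ
  have hdπ' : IsUnit (1 - γ • Pπ').det := aux_isUnit hγ0' hγ1 _ hnPπ'
  have hdβ : IsUnit (1 - γ • Pβ).det := aux_isUnit hγ0' hγ1 _ hnPβ
  -- Bellman equations
  have hvπ : (1 - γ • Pπ) *ᵥ vπ = polπ *ᵥ r := by
    show (1 - γ • Pπ) *ᵥ ((1 - γ • Pπ)⁻¹ *ᵥ (polπ *ᵥ r)) = _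
    rw [Matrix.mulVec_mulVec, Matrix.mul_nonsing_inv _ hdπ, Matrix.one_mulVec]
  have hvπ' : (1 - γ • Pπ') *ᵥ vπ' = polπ' *ᵥ r := by
    show (1 - γ • Pπ') *ᵥ ((1 - γ • Pπ')⁻¹ *ᵥ (polπ' *ᵥ r)) = _
    rw [Matrix.mulVec_mulVec, Matrix.mul_nonsing_inv _ hdπ', Matrix.one_mulVec]
  have hqππ : polπ *ᵥ qπ = polπ *ᵥ r + γ • (Pπ *ᵥ vπ) := by
    show polπ *ᵥ (r + γ • (P *ᵥ vπ)) = _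
    rw [Matrix.mulVec_add, Matrix.mulVec_smul, Matrix.mulVec_mulVec]
  have hqππ' : polπ' *ᵥ qπ = polπ' *ᵥ r + γ • (Pπ' *ᵥ vπ) := by
    show polπ' *ᵥ (r + γ • (P *ᵥ vπ)) = _
    rw [Matrix.mulVec_add, Matrix.mulVec_smul, Matrix.mulVec_mulVec]
  have hvπ2 : vπ - γ • (Pπ *ᵥ vπ) = polπ *ᵥ r := by
    rw [← hvπ, Matrix.sub_mulVec, Matrix.one_mulVec, Matrix.smul_mulVec]
  have hvq : polπ *ᵥ qπ = vπ := by
    rw [hqππ, ← hvπ2]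
    abel
  have hkey : (1 - γ • Pπ') *ᵥ (vπ' - vπ) = Abar := by
    rw [Matrix.mulVec_sub, hvπ', Matrix.sub_mulVec, Matrix.one_mulVec,
      Matrix.smul_mulVec]
    have hA : Abar = polπ' *ᵥ qπ - polπ *ᵥ qπ := by
      show (polπ' - polπ) *ᵥ qπ = _
      rw [Matrix.sub_mulVec]
    rw [hA, hvq, hqππ']
    abel
  have hdiff : vπ' - vπ = (1 - γ • Pπ')⁻¹ *ᵥ Abar := by
    rw [← hkey, Matrix.mulVec_mulVec, Matrix.nonsing_inv_mul _ hdπ', Matrix.one_mulVec]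
  have hη : ρ₀ ⬝ᵥ vπ' - ρ₀ ⬝ᵥ vπ = (ρ₀ ᵥ* (1 - γ • Pπ')⁻¹) ⬝ᵥ Abar := by
    rw [← dotProduct_sub, hdiff, Matrix.dotProduct_mulVec]
  set c : ℝ := (1 - γ)⁻¹ with hc
  have hc0 : (0:ℝ) ≤ c := by rw [hc]; exact inv_nonneg.mpr (by linarith)
  have hcinv : ‖(1 - γ • Pπ')⁻¹‖ ≤ c := aux_inv_norm_le hγ0' hγ1 _ hnPπ'
  have hdev : ∀ (Q : Matrix S S ℝ) (pol : Matrix S (S × A) ℝ), Q = pol * P → ‖Q‖ ≤ 1 →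
      IsUnit (1 - γ • Q).det →
      |(ρ₀ ᵥ* (1 - γ • Pπ')⁻¹) ⬝ᵥ Abar - (ρ₀ ᵥ* (1 - γ • Q)⁻¹) ⬝ᵥ Abar|
        ≤ c * (γ * ‖polπ' - pol‖) * c * ‖Abar‖ := by
    intro Q pol hQp hQn hQd
    have e1a : ∀ M : Matrix S S ℝ, (ρ₀ ᵥ* M) ⬝ᵥ Abar = ρ₀ ⬝ᵥ (M *ᵥ Abar) := fun M =>
      (Matrix.dotProduct_mulVec _ _ _).symm
    have e1 : (ρ₀ ᵥ* (1 - γ • Pπ')⁻¹) ⬝ᵥ Abar - (ρ₀ ᵥ* (1 - γ • Q)⁻¹) ⬝ᵥ Abar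
        = ρ₀ ⬝ᵥ (((1 - γ • Pπ')⁻¹ - (1 - γ • Q)⁻¹) *ᵥ Abar) := by
      rw [e1a, e1a, Matrix.sub_mulVec, dotProduct_sub]
    have e2 : (1 - γ • Pπ')⁻¹ - (1 - γ • Q)⁻¹
        = (1 - γ • Pπ')⁻¹ * (γ • (Pπ' - Q)) * (1 - γ • Q)⁻¹ := by
      rw [Matrix.inv_sub_inv (by
        rw [Matrix.isUnit_iff_isUnit_det, Matrix.isUnit_iff_isUnit_det]
        exact iff_of_true hdπ' hQd)]
      congr 2
      module
    have hmid : ‖γ • (Pπ' - Q)‖ ≤ γ * ‖polπ' - pol‖ := by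
      rw [norm_smul, Real.norm_eq_abs, abs_of_nonneg hγ0']
      apply mul_le_mul_of_nonneg_left _ hγ0'
      have hfac : Pπ' - Q = (polπ' - pol) * P := by
        rw [hQp]
        show polπ' * P - pol * P = _
        rw [Matrix.sub_mul]
      rw [hfac]
      calc ‖(polπ' - pol) * P‖ ≤ ‖polπ' - pol‖ * ‖P‖ := Matrix.linfty_opNorm_mul _ _
        _ ≤ ‖polπ' - pol‖ * 1 := mul_le_mul_of_nonneg_left hnP (norm_nonneg _)
        _ = ‖polπ' - pol‖ := mul_one _
    have hQinv : ‖(1 - γ • Q)⁻¹‖ ≤ c := aux_inv_norm_le hγ0' hγ1 _ hQn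
    rw [e1, e2]
    calc |ρ₀ ⬝ᵥ (((1 - γ • Pπ')⁻¹ * (γ • (Pπ' - Q)) * (1 - γ • Q)⁻¹) *ᵥ Abar)|
        ≤ ‖((1 - γ • Pπ')⁻¹ * (γ • (Pπ' - Q)) * (1 - γ • Q)⁻¹) *ᵥ Abar‖ :=
          aux_abs_dot_le ρ₀ hρ₀pos hρ₀sum _
      _ ≤ ‖(1 - γ • Pπ')⁻¹ * (γ • (Pπ' - Q)) * (1 - γ • Q)⁻¹‖ * ‖Abar‖ :=
          Matrix.linfty_opNorm_mulVec _ _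
      _ ≤ c * (γ * ‖polπ' - pol‖) * c * ‖Abar‖ := by
          apply mul_le_mul_of_nonneg_right _ (norm_nonneg _)
          calc ‖(1 - γ • Pπ')⁻¹ * (γ • (Pπ' - Q)) * (1 - γ • Q)⁻¹‖
              ≤ ‖(1 - γ • Pπ')⁻¹ * (γ • (Pπ' - Q))‖ * ‖(1 - γ • Q)⁻¹‖ :=
                Matrix.linfty_opNorm_mul _ _
            _ ≤ ‖(1 - γ • Pπ')⁻¹‖ * ‖γ • (Pπ' - Q)‖ * ‖(1 - γ • Q)⁻¹‖ :=
                mul_le_mul_of_nonneg_right (Matrix.linfty_opNorm_mul _ _) (norm_nonneg _)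
            _ ≤ c * (γ * ‖polπ' - pol‖) * c := by
                apply mul_le_mul (mul_le_mul hcinv hmid (norm_nonneg _) hc0) hQinv
                  (norm_nonneg _) (mul_nonneg hc0 (mul_nonneg hγ0' (norm_nonneg _)))
  have h1 := hdev Pπ polπ rfl hnPπ hdπ
  have h2 := hdev Pβ polβ rfl hnPβ hdβ
  have hAb : ‖Abar‖ ≤ ‖polπ' - polπ‖ * ‖qπ‖ := by
    show ‖(polπ' - polπ) *ᵥ qπ‖ ≤ _
    exact Matrix.linfty_opNorm_mulVec _ _
  have hρπdef : ρπ = ρ₀ ᵥ* (1 - γ • Pπ)⁻¹ := rfl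
  have hρβdef : ρβ = ρ₀ ᵥ* (1 - γ • Pβ)⁻¹ := rfl
  rw [ge_iff_le, hη, aux_normInfM_eq, aux_normInfM_eq, aux_normInfV_eq, hρπdef, hρβdef]
  set x := (ρ₀ ᵥ* (1 - γ • Pπ')⁻¹) ⬝ᵥ Abar with hx
  set a := (ρ₀ ᵥ* (1 - γ • Pπ)⁻¹) ⬝ᵥ Abar with ha
  set b := (ρ₀ ᵥ* (1 - γ • Pβ)⁻¹) ⬝ᵥ Abar with hb
  set N1 := ‖polπ' - polπ‖ with hN1
  set N2 := ‖polπ' - polβ‖ with hN2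
  set nq := ‖qπ‖ with hnq
  set nA := ‖Abar‖ with hnA
  have hγcc : γ / (1 - γ) ^ 2 = γ * c * c := by
    rw [hc]
    field_simp
  rw [hγcc]
  have hN10 : 0 ≤ N1 := norm_nonneg _
  have hN20 : 0 ≤ N2 := norm_nonneg _
  have hnq0 : 0 ≤ nq := norm_nonneg _
  have hnA0 : 0 ≤ nA := norm_nonneg _
  have e1 : a - c * (γ * N1) * c * nA ≤ x := by
    have h := (abs_le.mp h1).1
    linarith
  have e2 : b - c * (γ * N2) * c * nA ≤ x := by
    have h := (abs_le.mp h2).1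
    linarith
  have eα : α * (a - c * (γ * N1) * c * nA) ≤ α * x := mul_le_mul_of_nonneg_left e1 hα0
  have eβ : (1 - α) * (b - c * (γ * N2) * c * nA) ≤ (1 - α) * x :=
    mul_le_mul_of_nonneg_left e2 (by linarith)
  have hq1 : (0:ℝ) ≤ c * (γ * N1) * c := by positivity
  have hq2 : (0:ℝ) ≤ c * (γ * N2) * c := by positivity
  have eAb1 : α * (c * (γ * N1) * c * nA) ≤ α * (c * (γ * N1) * c * (N1 * nq)) :=
    mul_le_mul_of_nonneg_left (mul_le_mul_of_nonneg_left hAb hq1) hα0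
  have eAb2 : (1 - α) * (c * (γ * N2) * c * nA) ≤ (1 - α) * (c * (γ * N2) * c * (N1 * nq)) :=
    mul_le_mul_of_nonneg_left (mul_le_mul_of_nonneg_left hAb hq2) (by linarith)
  nlinarith [eα, eβ, eAb1, eAb2]
end
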